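/- Let B = [[1,1],[1,1]] and C = [[1,0,1],[1,0,1],[0,1,1]]. With R the 2×3 matrix [[1,0,1],[0,1,1]] and S the 3×2 matrix [[1,0],[1,0],[0,1]], one has B = RS and C = SR (so B and C are elementary strong shift equivalent). Nevertheless, C is not unitally shift equivalent to B, and C is not unitally shift equivalent to the 1×1 matrix (2). In particular, strong shift equivalence does not imply unital shift equivalence. -/

import Mathlib

open Matrix

/-- `(R,S)` is a shift equivalence of lag `l` from the `n × n` ℕ-matrix `A` to the
`m × m` ℕ-matrix `B`. -/
def IsShiftEquivalence {n m : ℕ} (A : Matrix (Fin n) (Fin n) ℕ) (B : Matrix (Fin m) (Fin m) ℕ)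
    (R : Matrix (Fin n) (Fin m) ℕ) (S : Matrix (Fin m) (Fin n) ℕ) (l : ℕ) : Prop :=
  1 ≤ l ∧ A ^ l = R * S ∧ B ^ l = S * R ∧ A * R = R * B ∧ B * S = S * A

/-- `(R,S)` is a unital shift equivalence of lag `l` from `A` to `B`:
a shift equivalence such that `(Bᵀ)^p Rᵀ 𝟙 = (Bᵀ)^(p+q) 𝟙` for some `p q : ℕ`. -/
def IsUnitalShiftEquivalence {n m : ℕ} (A : Matrix (Fin n) (Fin n) ℕ)
    (B : Matrix (Fin m) (Fin m) ℕ)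
    (R : Matrix (Fin n) (Fin m) ℕ) (S : Matrix (Fin m) (Fin n) ℕ) (l : ℕ) : Prop :=
  IsShiftEquivalence A B R S l ∧
    ∃ p q : ℕ, (Bᵀ ^ p) *ᵥ (Rᵀ *ᵥ fun _ => 1) = (Bᵀ ^ (p + q)) *ᵥ (fun _ => 1)

/-- `A` and `B` are unitally shift equivalent. -/
def UnitallyShiftEquivalent {n m : ℕ} (A : Matrix (Fin n) (Fin n) ℕ)
    (B : Matrix (Fin m) (Fin m) ℕ) : Prop :=
  ∃ (l : ℕ) (R : Matrix (Fin n) (Fin m) ℕ) (S : Matrix (Fin m) (Fin n) ℕ),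
    IsUnitalShiftEquivalence A B R S l

/-- `A` and `B` are shift equivalent. -/
def ShiftEquivalent {n m : ℕ} (A : Matrix (Fin n) (Fin n) ℕ)
    (B : Matrix (Fin m) (Fin m) ℕ) : Prop :=
  ∃ (l : ℕ) (R : Matrix (Fin n) (Fin m) ℕ) (S : Matrix (Fin m) (Fin n) ℕ),
    IsShiftEquivalence A B R S l


private lemma rowsum_pow {n : ℕ} (A : Matrix (Fin n) (Fin n) ℕ)
    (h : ∀ i, ∑ j, A i j = 2) : ∀ (l : ℕ) (i : Fin n), ∑ j, (A ^ l) i j = 2 ^ l := by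
  intro l
  induction l with
  | zero => intro i; simp [Matrix.one_apply]
  | succ l ih =>
      intro i
      rw [pow_succ]
      simp only [Matrix.mul_apply]
      rw [Finset.sum_comm]
      have : ∀ k, ∑ j, (A ^ l) i k * A k j = (A ^ l) i k * 2 := by
        intro k; rw [← Finset.mul_sum, h k]
      rw [Finset.sum_congr rfl fun k _ => this k, ← Finset.sum_mul, ih i, pow_succ]

private lemma no_unital {m : ℕ} (B : Matrix (Fin m) (Fin m) ℕ)
    (hm : m = 1 ∨ m = 2) (hB : ∀ i, ∑ j, B i j = 2) :
    ¬ UnitallyShiftEquivalent !![(1 : ℕ), 0, 1; 1, 0, 1; 0, 1, 1] B := by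
  rintro ⟨l, R, S, ⟨⟨hl, hCl, hBl, hCR, hBS⟩, p, q, hpq⟩⟩
  set C : Matrix (Fin 3) (Fin 3) ℕ := !![(1 : ℕ), 0, 1; 1, 0, 1; 0, 1, 1] with hC
  set u : Fin 3 → ℕ := fun i => ∑ j, R i j with hu
  -- from C * R = R * B: C acts on row sums with eigenvalue 2
  have heig : ∀ i, ∑ k, C i k * u k = 2 * u i := by
    intro i
    have e : ∑ j, (C * R) i j = ∑ j, (R * B) i j := by rw [hCR]
    simp only [Matrix.mul_apply] at e
    rw [Finset.sum_comm] at e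
    have eL : ∀ k, ∑ j, C i k * R k j = C i k * u k := by
      intro k; rw [← Finset.mul_sum]
    rw [Finset.sum_congr rfl fun k _ => eL k] at e
    rw [Finset.sum_comm] at e
    have eR : ∀ k, ∑ j, R i k * B k j = R i k * 2 := by
      intro k; rw [← Finset.mul_sum, hB k]
    rw [Finset.sum_congr rfl fun k _ => eR k] at e
    rw [e, ← Finset.sum_mul, mul_comm]
  -- u is constant
  have h0 := heig 0
  have h1 := heig 1
  have h2 := heig 2
  simp [hC, Fin.sum_univ_three] at h0 h1 h2
  have hu1 : u 1 = u 0 := by omega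
  have hu2 : u 2 = u 0 := by omega
  -- sum the unital condition
  have key : ∑ i, ((Bᵀ ^ p) *ᵥ (Rᵀ *ᵥ fun _ => 1)) i
      = ∑ i, ((Bᵀ ^ (p + q)) *ᵥ fun _ => (1 : ℕ)) i := by rw [hpq]
  have hTrow : ∀ (k : ℕ) (j : Fin m), ∑ i, (Bᵀ ^ k) i j = 2 ^ k := by
    intro k j
    rw [← Matrix.transpose_pow]
    simp only [Matrix.transpose_apply]
    exact rowsum_pow B hB k j
  have expand : ∀ (k : ℕ) (w : Fin m → ℕ),
      ∑ i, ((Bᵀ ^ k) *ᵥ w) i = 2 ^ k * ∑ j, w j := by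
    intro k w
    simp only [Matrix.mulVec, dotProduct]
    rw [Finset.sum_comm, Finset.mul_sum]
    refine Finset.sum_congr rfl fun j _ => ?_
    rw [← Finset.sum_mul, hTrow k j]
  rw [expand, expand] at key
  have hw : ∑ j, (Rᵀ *ᵥ fun _ => (1 : ℕ)) j = 3 * u 0 := by
    simp only [Matrix.mulVec, dotProduct, Matrix.transpose_apply, mul_one]
    rw [Finset.sum_comm]
    show ∑ i, u i = 3 * u 0
    rw [Fin.sum_univ_three, hu1, hu2]; ring
  rw [hw] at key
  have hones : ∑ _j : Fin m, (1 : ℕ) = m := by simp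
  rw [hones] at key
  -- key : 2 ^ p * (3 * u 0) = 2 ^ (p + q) * m
  have key2 : 3 * u 0 = 2 ^ q * m := by
    rw [pow_add, mul_assoc] at key
    exact Nat.eq_of_mul_eq_mul_left (by positivity : 0 < 2 ^ p) key
  have h3 : (3 : ℕ) ∣ 2 ^ q * m := ⟨u 0, by omega⟩
  rcases (Nat.Prime.dvd_mul (by norm_num)).mp h3 with h | h
  · exact absurd (Nat.Prime.dvd_of_dvd_pow (by norm_num) h) (by norm_num)
  · rcases hm with rfl | rfl <;> omega

/-- **Statement 14.** With `B = [[1,1],[1,1]]`, `C = [[1,0,1],[1,0,1],[0,1,1]]`,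
`R = [[1,0,1],[0,1,1]]` and `S = [[1,0],[1,0],[0,1]]`, one has `B = R * S` and `C = S * R`
(so `B` and `C` are elementary strong shift equivalent), yet `C` is not unitally shift
equivalent to `B`, nor to the matrix `(2)`.  In particular, strong shift equivalence does
not imply unital shift equivalence. -/
theorem strongShiftEquivalence_not_implies_unitallyShiftEquivalent :
    (!![(1 : ℕ), 1; 1, 1] = !![(1 : ℕ), 0, 1; 0, 1, 1] * !![(1 : ℕ), 0; 1, 0; 0, 1]) ∧
    (!![(1 : ℕ), 0, 1; 1, 0, 1; 0, 1, 1] =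
      !![(1 : ℕ), 0; 1, 0; 0, 1] * !![(1 : ℕ), 0, 1; 0, 1, 1]) ∧
    ¬ UnitallyShiftEquivalent !![(1 : ℕ), 0, 1; 1, 0, 1; 0, 1, 1] !![(1 : ℕ), 1; 1, 1] ∧
    ¬ UnitallyShiftEquivalent !![(1 : ℕ), 0, 1; 1, 0, 1; 0, 1, 1] !![(2 : ℕ)] := by
  refine ⟨by decide, by decide, ?_, ?_⟩
  · exact no_unital _ (Or.inr rfl) (by decide)
  · exact no_unital _ (Or.inl rfl) (by decide)
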